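/- Under the hypotheses of the coupled eigenvector system (diag(γ)Ψdiag(γ)β = μ_β Λ²β, diag(β)Ψdiag(β)γ = μ_γ Λ²γ, β᷀Λ²β = γ᷀Λ²γ = 1), if the supports of β and γ are equal and nonempty, then μ_β = μ_γ and there exists a sign vector s with s_i ∈ {−1,1} on the common support such that β_i = s_i γ_i for all i (equivalently β² = γ² entrywise). -/

import Mathlib

open Matrix

open MeasureTheory Real Set in
private lemma integral_exp_cmul {c : ℝ} (hc : c < 0) :
    IntegrableOn (fun t : ℝ => Real.exp (c * t)) (Set.Ioi 0) volume ∧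
      ∫ t in Set.Ioi (0 : ℝ), Real.exp (c * t) = -1 / c := by
  have hc' : 0 < -c := by linarith
  have hint : IntegrableOn (fun t : ℝ => Real.exp (c * t)) (Set.Ioi 0) volume := by
    have := exp_neg_integrableOn_Ioi 0 hc'
    simpa using this
  refine ⟨hint, ?_⟩
  have hderiv : ∀ x ∈ Ici (0 : ℝ), HasDerivAt (fun t => Real.exp (c * t) / c)
      (Real.exp (c * x)) x := by
    intro x _
    have h1 : HasDerivAt (fun t : ℝ => c * t) c x := by
      simpa using (hasDerivAt_id x).const_mul c
    have h2 : HasDerivAt (fun t : ℝ => Real.exp (c * t)) (Real.exp (c * x) * c) x :=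
      (Real.hasDerivAt_exp (c * x)).comp x h1
    have h3 := h2.div_const c
    simpa [mul_div_assoc, mul_div_cancel_right₀ _ (ne_of_lt hc)] using h3
  have htend : Filter.Tendsto (fun t => Real.exp (c * t) / c) Filter.atTop (nhds 0) := by
    have hexp : Filter.Tendsto (fun t : ℝ => Real.exp (c * t)) Filter.atTop (nhds 0) := by
      have : Filter.Tendsto (fun t : ℝ => c * t) Filter.atTop Filter.atBot :=
        Filter.Tendsto.const_mul_atTop_of_neg hc Filter.tendsto_id
      exact Real.tendsto_exp_atBot.comp this
    simpa using hexp.div_const c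
  have := integral_Ioi_of_hasDerivAt_of_tendsto' hderiv hint htend
  rw [this]
  simp only [mul_zero, Real.exp_zero]
  field_simp
  ring

open MeasureTheory Real Set in
private lemma cauchy_quadform_pos (n : ℕ) (l : Fin n → ℝ)
    (hneg : ∀ i, l i < 0) (hinj : Function.Injective l)
    (w : Fin n → ℝ) (hw : w ≠ 0) :
    0 < ∑ i, ∑ j, w i * w j * (-1 / (l i + l j)) := by
  classical
  set f : ℝ → ℝ := fun t => ∑ i, w i * Real.exp (l i * t) with hf
  have hsum : ∀ i j : Fin n, l i + l j < 0 := fun i j => by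
    have := hneg i; have := hneg j; linarith
  -- each term integrable
  have hterm_int : ∀ (i j : Fin n),
      IntegrableOn (fun t : ℝ => w i * w j * Real.exp ((l i + l j) * t)) (Ioi 0) volume :=
    fun i j => ((integral_exp_cmul (hsum i j)).1).const_mul _
  -- f^2 expansion
  have hsq : ∀ t : ℝ, (f t) ^ 2 = ∑ i, ∑ j, w i * w j * Real.exp ((l i + l j) * t) := by
    intro t
    rw [hf, sq, Finset.sum_mul_sum]
    refine Finset.sum_congr rfl fun i _ => Finset.sum_congr rfl fun j _ => ?_
    rw [add_mul, Real.exp_add]; ring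
  have hf2int : IntegrableOn (fun t => (f t) ^ 2) (Ioi 0) volume := by
    have : IntegrableOn (fun t : ℝ => ∑ i, ∑ j, w i * w j * Real.exp ((l i + l j) * t))
        (Ioi 0) volume :=
      integrable_finset_sum _ fun i _ => integrable_finset_sum _ fun j _ => hterm_int i j
    exact this.congr_fun (fun t _ => (hsq t).symm) measurableSet_Ioi
  have hint_eq : ∫ t in Ioi (0 : ℝ), (f t) ^ 2 =
      ∑ i, ∑ j, w i * w j * (-1 / (l i + l j)) := by
    rw [setIntegral_congr_fun measurableSet_Ioi (fun t _ => hsq t)]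
    rw [integral_finset_sum _ fun i _ =>
      integrable_finset_sum _ fun j _ => hterm_int i j]
    refine Finset.sum_congr rfl fun i _ => ?_
    rw [integral_finset_sum _ fun j _ => hterm_int i j]
    refine Finset.sum_congr rfl fun j _ => ?_
    rw [integral_const_mul, (integral_exp_cmul (hsum i j)).2]
  rw [← hint_eq]
  -- positivity
  have hfc : Continuous f := by
    apply continuous_finset_sum
    intro i _
    exact (continuous_const.mul ((continuous_const.mul continuous_id).rexp))
  have hnonneg : 0 ≤ᵐ[volume.restrict (Ioi (0:ℝ))] fun t => (f t) ^ 2 :=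
    Filter.Eventually.of_forall fun t => sq_nonneg _
  rw [setIntegral_pos_iff_support_of_nonneg_ae hnonneg hf2int]
  -- suppose measure zero: then support is empty, f = 0 on Ioi 0, contradiction
  by_contra hcon
  push_neg at hcon
  have hzero : volume (Function.support (fun t => (f t) ^ 2) ∩ Ioi 0) = 0 :=
    le_antisymm hcon zero_le
  have hopen : IsOpen (Function.support (fun t => (f t) ^ 2) ∩ Ioi 0) := by
    refine IsOpen.inter ?_ isOpen_Ioi
    exact (hfc.pow 2).isOpen_support
  have hempty : Function.support (fun t => (f t) ^ 2) ∩ Ioi 0 = ∅ :=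
    (hopen.measure_eq_zero_iff volume).mp hzero
  -- so f = 0 on Ioi 0
  have hfIoi : ∀ t ∈ Ioi (0 : ℝ), f t = 0 := by
    intro t ht
    by_contra hft
    have : t ∈ Function.support (fun t => (f t) ^ 2) ∩ Ioi 0 :=
      ⟨by simp [Function.mem_support, pow_eq_zero_iff, hft], ht⟩
    rw [hempty] at this
    exact this
  -- by continuity, f = 0 on Ici 0
  have hfIci : ∀ t ∈ Ici (0 : ℝ), f t = 0 := by
    have h0 : Set.EqOn f 0 (Ioi 0) := fun t ht => hfIoi t ht
    have := h0.closure hfc continuous_const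
    rw [closure_Ioi] at this
    exact fun t ht => this ht
  -- linear independence of characters
  let ch : Fin n → (Multiplicative { x : ℝ // 0 ≤ x } →* ℝ) := fun i =>
    { toFun := fun x => Real.exp (l i * (Multiplicative.toAdd x : { x : ℝ // 0 ≤ x }).1)
      map_one' := by simp
      map_mul' := by
        intro x y
        show Real.exp (l i * ((Multiplicative.toAdd x).1 + (Multiplicative.toAdd y).1)) = _
        rw [mul_add, Real.exp_add] }
  have hch_inj : Function.Injective ch := by
    intro i j hij
    have := DFunLike.congr_fun hij (Multiplicative.ofAdd (⟨1, zero_le_one⟩ : { x : ℝ // 0 ≤ x }))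
    simp only [ch, MonoidHom.coe_mk, OneHom.coe_mk] at this
    have hl : l i = l j := by
      have h1 : l i * (1 : ℝ) = l j * 1 := Real.exp_injective (by simpa using this)
      simpa using h1
    exact hinj hl
  have hli : LinearIndependent ℝ (fun i : Fin n => ⇑(ch i)) :=
    (linearIndependent_monoidHom (Multiplicative { x : ℝ // 0 ≤ x }) ℝ).comp ch hch_inj
  have hwzero : ∀ i, w i = 0 := by
    have hcomb : ∑ i, w i • ⇑(ch i) = 0 := by
      funext x
      have hx : ((Multiplicative.toAdd x : { x : ℝ // 0 ≤ x }) : { x : ℝ // 0 ≤ x }).1 ∈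
          Ici (0 : ℝ) := (Multiplicative.toAdd x).2
      have := hfIci _ hx
      simpa [ch, hf, Finset.sum_apply] using this
    exact Fintype.linearIndependent_iff.mp hli w hcomb
  exact hw (funext hwzero)

theorem equal_supports_sign_relation
    (n : ℕ) (l : Fin n → ℝ)
    (hneg : ∀ i, l i < 0) (hinj : Function.Injective l)
    (Ψ : Matrix (Fin n) (Fin n) ℝ) (hΨ : Ψ = Matrix.of fun i j => -1 / (l i + l j))
    (Λ : Matrix (Fin n) (Fin n) ℝ) (hΛ : Λ = Matrix.diagonal l)
    (β γ : Fin n → ℝ) (μβ μγ : ℝ)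
    (h1 : (diagonal γ * Ψ * diagonal γ) *ᵥ β = μβ • ((Λ * Λ) *ᵥ β))
    (h2 : (diagonal β * Ψ * diagonal β) *ᵥ γ = μγ • ((Λ * Λ) *ᵥ γ))
    (hβn : β ⬝ᵥ (Λ * Λ) *ᵥ β = 1) (hγn : γ ⬝ᵥ (Λ * Λ) *ᵥ γ = 1)
    (hsupp : {i | β i ≠ 0} = {i | γ i ≠ 0})
    (hne : {i | β i ≠ 0}.Nonempty) :
    μβ = μγ ∧
      (∃ s : Fin n → ℝ, (∀ i, β i ≠ 0 → s i = 1 ∨ s i = -1) ∧ ∀ i, β i = s i * γ i) ∧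
      ∀ i, (β i) ^ 2 = (γ i) ^ 2 := by
  classical
  have hΛΛ : Λ * Λ = diagonal (fun i => l i ^ 2) := by
    rw [hΛ, diagonal_mul_diagonal]
    congr 1; funext i; ring
  -- componentwise versions of h1 and h2
  set v : Fin n → ℝ := fun i => ∑ j, Ψ i j * (γ j * β j) with hv
  have hdg1 : diagonal γ *ᵥ β = fun j => γ j * β j := funext fun j => mulVec_diagonal _ _ _
  have hdg2 : diagonal β *ᵥ γ = fun j => β j * γ j := funext fun j => mulVec_diagonal _ _ _
  have e1 : ∀ i, γ i * v i = μβ * (l i ^ 2 * β i) := by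
    intro i
    have := congrFun h1 i
    rw [← mulVec_mulVec, ← mulVec_mulVec, hΛΛ, hdg1] at this
    simp only [mulVec_diagonal, Pi.smul_apply, smul_eq_mul] at this
    simpa [hv, mulVec, dotProduct] using this
  have e2 : ∀ i, β i * v i = μγ * (l i ^ 2 * γ i) := by
    intro i
    have := congrFun h2 i
    rw [← mulVec_mulVec, ← mulVec_mulVec, hΛΛ, hdg2] at this
    simp only [mulVec_diagonal, Pi.smul_apply, smul_eq_mul] at this
    have h' : β i * (∑ j, Ψ i j * (β j * γ j)) = μγ * (l i ^ 2 * γ i) := by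
      simpa [mulVec, dotProduct] using this
    rw [hv]
    convert h' using 3
    ring_nf
  -- norms componentwise
  have hβn' : ∑ i, β i * (l i ^ 2 * β i) = 1 := by
    rw [← hβn, hΛΛ]
    simp [dotProduct, mulVec_diagonal]
  have hγn' : ∑ i, γ i * (l i ^ 2 * γ i) = 1 := by
    rw [← hγn, hΛΛ]
    simp [dotProduct, mulVec_diagonal]
  -- the common quantity Q
  set w : Fin n → ℝ := fun i => γ i * β i with hwdef
  have hQβ : ∑ i, w i * v i = μβ := by
    calc ∑ i, w i * v i = ∑ i, β i * (γ i * v i) := by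
          refine Finset.sum_congr rfl fun i _ => ?_; rw [hwdef]; ring
      _ = ∑ i, μβ * (β i * (l i ^ 2 * β i)) := by
          refine Finset.sum_congr rfl fun i _ => ?_; rw [e1 i]; ring
      _ = μβ := by rw [← Finset.mul_sum, hβn', mul_one]
  have hQγ : ∑ i, w i * v i = μγ := by
    calc ∑ i, w i * v i = ∑ i, γ i * (β i * v i) := by
          refine Finset.sum_congr rfl fun i _ => ?_; rw [hwdef]; ring
      _ = ∑ i, μγ * (γ i * (l i ^ 2 * γ i)) := by
          refine Finset.sum_congr rfl fun i _ => ?_; rw [e2 i]; ring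
      _ = μγ := by rw [← Finset.mul_sum, hγn', mul_one]
  have hμ : μβ = μγ := hQβ.symm.trans hQγ
  -- Q > 0
  have hwne : w ≠ 0 := by
    obtain ⟨i₀, hi₀⟩ := hne
    have hγi₀ : γ i₀ ≠ 0 := by
      have : i₀ ∈ {i | γ i ≠ 0} := hsupp ▸ hi₀
      exact this
    intro h
    have := congrFun h i₀
    simp only [hwdef, Pi.zero_apply] at this
    exact hγi₀ (by rcases mul_eq_zero.mp this with h | h; exact h; exact absurd h hi₀)
  have hQpos : 0 < ∑ i, w i * v i := by
    have heq : ∑ i, w i * v i = ∑ i, ∑ j, w i * w j * (-1 / (l i + l j)) := by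
      refine Finset.sum_congr rfl fun i _ => ?_
      rw [hv, Finset.mul_sum]
      refine Finset.sum_congr rfl fun j _ => ?_
      rw [hΨ]
      simp only [Matrix.of_apply, hwdef]
      ring
    rw [heq]
    exact cauchy_quadform_pos n l hneg hinj w hwne
  have hμβpos : 0 < μβ := hQβ ▸ hQpos
  -- squares equal
  have hsq : ∀ i, (β i) ^ 2 = (γ i) ^ 2 := by
    intro i
    have ha : β i * (γ i * v i) = μβ * (l i ^ 2 * β i ^ 2) := by
      rw [e1 i]; ring
    have hb : γ i * (β i * v i) = μγ * (l i ^ 2 * γ i ^ 2) := by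
      rw [e2 i]; ring
    have hab : μβ * (l i ^ 2 * β i ^ 2) = μγ * (l i ^ 2 * γ i ^ 2) := by
      rw [← ha, ← hb]; ring
    rw [← hμ] at hab
    have hl2 : (l i) ^ 2 ≠ 0 := pow_ne_zero 2 (ne_of_lt (hneg i))
    have := mul_left_cancel₀ (ne_of_gt hμβpos) hab
    exact mul_left_cancel₀ hl2 this
  refine ⟨hμ, ⟨fun i => if γ i = 0 then 1 else β i / γ i, ?_, ?_⟩, hsq⟩
  · intro i hβi
    have hγi : γ i ≠ 0 := by
      have : i ∈ {j | γ j ≠ 0} := hsupp ▸ hβi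
      exact this
    simp only [if_neg hγi]
    have : (β i / γ i) ^ 2 = 1 := by
      rw [div_pow, hsq i, div_self (pow_ne_zero 2 hγi)]
    exact mul_self_eq_one_iff.mp (by rwa [← sq])
  · intro i
    by_cases hγi : γ i = 0
    · simp only [if_pos hγi, hγi, mul_zero, one_mul]
      by_contra hβi
      have : i ∈ {j | γ j ≠ 0} := hsupp ▸ hβi
      exact this hγi
    · simp only [if_neg hγi]
      field_simp
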